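/- Let E ∈ ℝ^{N×N} be a matrix with nonnegative entries and zero diagonal (an adjacency matrix), let D = diag(d_1, …, d_N) with d_i = Σ_j E_{ij}, let L = D − E be the graph Laplacian, and let G = diag(g_1, …, g_N) with all g_i ≥ 0. Suppose there exists a root index r such that g_r > 0 and every index i ∈ {1, …, N} is reachable from r along directed edges, i.e., i is related to r by the reflexive-transitive closure of the relation (j → i whenever E_{ij} > 0). Then the pinned Laplacian L + G is nonsingular, and every complex eigenvalue λ of L + G satisfies Re(λ) > 0. -/

import Mathlib

open Matrix

/-- **Pinned Laplacian nonsingularity** (Lemma 1 of the paper).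
For a weighted digraph on `N` nodes with nonnegative adjacency matrix `E`
(zero diagonal), Laplacian `L = D − E` with `D = diag(row sums)`, and nonnegative
pinning gains `g` such that some root `r` has `g r > 0` and every node is
reachable from `r` along directed edges (`E i j > 0` meaning an edge from `j`
into `i`), the pinned Laplacian `L + G` is nonsingular and all of its complex
eigenvalues have positive real part. -/
theorem pinnedLaplacian_nonsingular_and_spectrum_pos {N : ℕ}
    (E : Matrix (Fin N) (Fin N) ℝ)
    (hE_nonneg : ∀ i j, 0 ≤ E i j) (hE_diag : ∀ i, E i i = 0)
    (g : Fin N → ℝ) (hg : ∀ i, 0 ≤ g i)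
    (L : Matrix (Fin N) (Fin N) ℝ)
    (hL : L = Matrix.diagonal (fun i => ∑ j, E i j) - E)
    (G : Matrix (Fin N) (Fin N) ℝ) (hG : G = Matrix.diagonal g)
    (r : Fin N) (hr : 0 < g r)
    (hreach : ∀ i : Fin N, Relation.ReflTransGen (fun a b => 0 < E b a) r i) :
    IsUnit (L + G) ∧
      ∀ lam ∈ spectrum ℂ ((L + G).map (Complex.ofReal)), 0 < lam.re := by
  set d : Fin N → ℝ := fun i => ∑ j, E i j with hd
  have hd_nonneg : ∀ i, 0 ≤ d i := fun i => Finset.sum_nonneg fun j _ => hE_nonneg i j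
  set M : Matrix (Fin N) (Fin N) ℝ := L + G with hM
  set M' : Matrix (Fin N) (Fin N) ℂ := M.map Complex.ofReal with hM'
  -- The main claim: all complex eigenvalues have positive real part.
  have hspec : ∀ lam ∈ spectrum ℂ M', 0 < lam.re := by
    intro lam hlam
    by_contra hre
    push_neg at hre
    -- extract an eigenvector
    rw [spectrum.mem_iff] at hlam
    rw [Matrix.isUnit_iff_isUnit_det, isUnit_iff_ne_zero, not_not] at hlam
    obtain ⟨v, hv0, hv⟩ := (Matrix.exists_mulVec_eq_zero_iff).mpr hlam
    have hv' : M' *ᵥ v = lam • v := by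
      have := hv
      rw [Matrix.sub_mulVec, sub_eq_zero] at this
      have halg : (algebraMap ℂ (Matrix (Fin N) (Fin N) ℂ)) lam = lam • 1 := by
        rw [Algebra.algebraMap_eq_smul_one]
      rw [halg, Matrix.smul_mulVec, Matrix.one_mulVec] at this
      exact this.symm
    -- the row equation
    have hrow : ∀ i, (((d i + g i : ℝ) : ℂ) - lam) * v i = ∑ j, ((E i j : ℝ) : ℂ) * v j := by
      intro i
      have h1 : (M' *ᵥ v) i = lam * v i := by rw [hv']; rfl
      have h2 : (M' *ᵥ v) i = ((d i + g i : ℝ) : ℂ) * v i - ∑ j, ((E i j : ℝ) : ℂ) * v j := by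
        simp only [hM', hM, hL, hG, Matrix.mulVec, dotProduct, Matrix.map_apply,
          Matrix.add_apply, Matrix.sub_apply]
        have : ∀ j ∈ Finset.univ, ((((Matrix.diagonal d i j - E i j + Matrix.diagonal g i j : ℝ)) : ℂ) * v j)
            = (((Matrix.diagonal d i j + Matrix.diagonal g i j : ℝ)) : ℂ) * v j - ((E i j : ℝ) : ℂ) * v j := by
          intro j _
          push_cast
          ring
        rw [Finset.sum_congr rfl this, Finset.sum_sub_distrib]
        congr 1
        have : ∀ j ∈ Finset.univ, (((Matrix.diagonal d i j + Matrix.diagonal g i j : ℝ)) : ℂ) * v j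
            = ((Matrix.diagonal (fun k => ((d k + g k : ℝ) : ℂ)) i j)) * v j := by
          intro j _
          by_cases h : i = j
          · subst h; simp [Matrix.diagonal_apply_eq]
          · simp [Matrix.diagonal_apply_ne _ h]
        rw [Finset.sum_congr rfl this]
        rw [show ∑ j, (Matrix.diagonal (fun k => ((d k + g k : ℝ) : ℂ))) i j * v j
            = ((Matrix.diagonal (fun k => ((d k + g k : ℝ) : ℂ))) *ᵥ v) i from rfl]
        rw [Matrix.mulVec_diagonal]
      rw [h1] at h2
      rw [sub_mul, h2]
      ring
    -- choose a coordinate of maximal modulus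
    obtain ⟨i0, -, hi0⟩ := Finset.exists_max_image Finset.univ (fun i => norm (v i))
      ⟨r, Finset.mem_univ r⟩
    set m : ℝ := norm (v i0) with hm
    have hmax : ∀ i, norm (v i) ≤ m := fun i => hi0 i (Finset.mem_univ i)
    have hmpos : 0 < m := by
      by_contra h
      push_neg at h
      apply hv0
      funext i
      have := hmax i
      have : norm (v i) ≤ 0 := le_trans this h
      have := le_antisymm this (norm_nonneg _)
      simpa using (norm_eq_zero.mp this)
    -- key per-node analysis
    have hnode : ∀ i, norm (v i) = m →
        g i = 0 ∧ ∀ j, 0 < E i j → norm (v j) = m := by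
      intro i hi
      have habs : norm ((((d i + g i : ℝ) : ℂ) - lam)) * m
          = norm (∑ j, ((E i j : ℝ) : ℂ) * v j) := by
        rw [← hi, ← norm_mul, hrow i]
      have hub : norm (∑ j, ((E i j : ℝ) : ℂ) * v j) ≤ ∑ j, E i j * norm (v j) := by
        refine le_trans (norm_sum_le _ _) ?_
        apply le_of_eq
        refine Finset.sum_congr rfl fun j _ => ?_
        rw [norm_mul, Complex.norm_real, Real.norm_eq_abs, abs_of_nonneg (hE_nonneg i j)]
      have hub2 : ∑ j, E i j * norm (v j) ≤ ∑ j, E i j * m := by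
        refine Finset.sum_le_sum fun j _ => ?_
        exact mul_le_mul_of_nonneg_left (hmax j) (hE_nonneg i j)
      have hsum_m : ∑ j, E i j * m = d i * m := by rw [← Finset.sum_mul]
      -- lower bound on the modulus
      have hlb : d i + g i - lam.re ≤ norm ((((d i + g i : ℝ) : ℂ) - lam)) := by
        have := Complex.re_le_norm ((((d i + g i : ℝ) : ℂ) - lam))
        simpa using this
      have hchain : (d i + g i - lam.re) * m ≤ d i * m := by
        calc (d i + g i - lam.re) * m
            ≤ norm ((((d i + g i : ℝ) : ℂ) - lam)) * m :=
              mul_le_mul_of_nonneg_right hlb (le_of_lt hmpos)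
          _ = norm (∑ j, ((E i j : ℝ) : ℂ) * v j) := habs
          _ ≤ ∑ j, E i j * norm (v j) := hub
          _ ≤ ∑ j, E i j * m := hub2
          _ = d i * m := hsum_m
      have hgz : g i = 0 ∧ lam.re = 0 := by
        have h1 : d i + g i - lam.re ≤ d i := le_of_mul_le_mul_right
          (by simpa using hchain) hmpos
        have h2 : g i - lam.re ≤ 0 := by linarith
        constructor
        · linarith [hg i]
        · linarith [hg i]
      obtain ⟨hgi, hlre⟩ := hgz
      refine ⟨hgi, ?_⟩
      -- equality analysis: all terms in the sum achieve max
      have hlb2 : d i ≤ norm ((((d i + g i : ℝ) : ℂ) - lam)) := by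
        have h := hlb
        rw [hgi, hlre] at h
        rw [hgi]
        simpa using h
      have hsum_eq : ∑ j, E i j * norm (v j) = ∑ j, E i j * m := by
        have hle : ∑ j, E i j * norm (v j) ≤ ∑ j, E i j * m := hub2
        have hge : ∑ j, E i j * m ≤ ∑ j, E i j * norm (v j) := by
          calc ∑ j, E i j * m = d i * m := hsum_m
            _ ≤ norm ((((d i + g i : ℝ) : ℂ) - lam)) * m :=
              mul_le_mul_of_nonneg_right hlb2 (le_of_lt hmpos)
            _ = norm (∑ j, ((E i j : ℝ) : ℂ) * v j) := habs
            _ ≤ ∑ j, E i j * norm (v j) := hub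
        exact le_antisymm hle hge
      have hterm : ∀ j ∈ Finset.univ, E i j * norm (v j) = E i j * m :=
        (Finset.sum_eq_sum_iff_of_le (fun j _ =>
          mul_le_mul_of_nonneg_left (hmax j) (hE_nonneg i j))).mp hsum_eq
      intro j hj
      have := hterm j (Finset.mem_univ j)
      exact mul_left_cancel₀ (ne_of_gt hj) this
    -- propagate maximality back to the root
    have hS : ∀ i, Relation.ReflTransGen (fun a b => 0 < E b a) r i →
        norm (v i) = m → norm (v r) = m := by
      intro i h
      induction h with
      | refl => exact fun h => h
      | tail _ hbc ih => exact fun hc => ih ((hnode _ hc).2 _ hbc)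
    have hrmax : norm (v r) = m := hS i0 (hreach i0) rfl
    have := (hnode r hrmax).1
    exact absurd this (ne_of_gt hr)
  refine ⟨?_, hspec⟩
  -- nonsingularity over ℝ
  by_contra h
  rw [Matrix.isUnit_iff_isUnit_det, isUnit_iff_ne_zero, not_not] at h
  have hdet' : M'.det = 0 := by
    rw [hM', show M.map Complex.ofReal = Complex.ofRealHom.mapMatrix M from rfl,
      ← RingHom.map_det]
    simp [h]
  have h0 : (0 : ℂ) ∈ spectrum ℂ M' := by
    rw [spectrum.mem_iff]
    rw [map_zero, zero_sub]
    intro hu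
    have hu' : IsUnit M' := by simpa using hu.neg
    rw [Matrix.isUnit_iff_isUnit_det, hdet'] at hu'
    simpa using hu'
  have := hspec 0 h0
  simp at this
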